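/- Let p > 3 be prime, q a power of p, and n \ge 0 an integer with 3 | n. If x \mapsto F_n(1,x) is a bijection of F_q, then gcd(n, q^2 - 1) = 3. -/

import Mathlib

def F3 {K : Type*} [Field K] (x : K) : ℕ → K
  | 0 => 0
  | 1 => 1
  | (n + 2) => F3 x (n + 1) - x * F3 x n

lemma F3_step {K : Type*} [Field K] (x : K) (k : ℕ) :
    F3 x (k + 2) = F3 x (k + 1) - x * F3 x k := rfl

lemma F3_key {K : Type*} [Field K] (y : K) :
    ∀ n : ℕ, (2 * y - 1) * F3 (y * (1 - y)) n = y ^ n - (1 - y) ^ n := by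
  intro n
  induction n using Nat.twoStepInduction with
  | zero => simp [F3]
  | one =>
    show (2 * y - 1) * 1 = y ^ 1 - (1 - y) ^ 1
    ring
  | more n ih1 ih2 =>
    rw [F3_step]
    linear_combination ih2 - (y * (1 - y)) * ih1

lemma F3_one {K : Type*} [Field K] (m : ℕ) : F3 (1 : K) (3 * m) = 0 := by
  induction m with
  | zero => simp [F3]
  | succ m ih =>
    have e : 3 * (m + 1) = 3 * m + 1 + 2 := by ring
    rw [e, F3_step]
    have e2 : 3 * m + 1 + 1 = 3 * m + 2 := by ring
    rw [e2, F3_step, ih]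
    ring

lemma F3_map {K L : Type*} [Field K] [Field L] (f : K →+* L) (x : K) :
    ∀ n : ℕ, f (F3 x n) = F3 (f x) n := by
  intro n
  induction n using Nat.twoStepInduction with
  | zero => simp [F3]
  | one => simp [F3]
  | more n ih1 ih2 => rw [F3_step, F3_step, map_sub, map_mul, ih1, ih2]


lemma sq_sub_one_fac (q : ℕ) (h : 1 ≤ q) : q ^ 2 - 1 = (q - 1) * (q + 1) := by
  obtain ⟨k, rfl⟩ := Nat.exists_eq_add_of_le h
  have h1 : (1 + k) ^ 2 = k * (k + 2) + 1 := by ring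
  rw [h1, Nat.add_sub_cancel, show 1 + k - 1 = k from by omega,
    show 1 + k + 1 = k + 2 from by omega]

theorem stmt18 {K : Type*} [Field K] [Fintype K] (p e : ℕ) (hp : p.Prime) (hp3 : 3 < p)
    [CharP K p] (hcard : Fintype.card K = p ^ e) (n : ℕ) (hn3 : 3 ∣ n)
    (hbij : Function.Bijective (fun x : K => F3 x n)) :
    Nat.gcd n (Fintype.card K ^ 2 - 1) = 3 := by
  classical
  haveI : Fact p.Prime := ⟨hp⟩
  obtain ⟨q, hq⟩ : ∃ q, Fintype.card K = q := ⟨_, rfl⟩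
  rw [hq] at hcard ⊢
  have hq2 : 1 < q := hq ▸ Fintype.one_lt_card
  have he : e ≠ 0 := by
    rintro rfl
    have h := hcard
    rw [pow_zero] at h
    omega
  have hp5 : 5 ≤ p := by
    have h4 : p ≠ 4 := by rintro rfl; norm_num at hp
    omega
  have hpq : p ∣ q := by
    rw [hcard]
    exact dvd_pow_self p he
  have hq5 : 5 ≤ q := le_trans hp5 (Nat.le_of_dvd (by omega) hpq)
  have hq6 : q % 6 = 1 ∨ q % 6 = 5 := by
    have hqodd : ¬ 2 ∣ q := by
      intro h2
      rw [hcard] at h2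
      have h2p : (2 : ℕ) ∣ p := Nat.Prime.dvd_of_dvd_pow Nat.prime_two h2
      have := (Nat.prime_dvd_prime_iff_eq Nat.prime_two hp).mp h2p
      omega
    have h3q : ¬ 3 ∣ q := by
      intro h3
      rw [hcard] at h3
      have h3p : (3 : ℕ) ∣ p := Nat.Prime.dvd_of_dvd_pow Nat.prime_three h3
      have := (Nat.prime_dvd_prime_iff_eq Nat.prime_three hp).mp h3p
      omega
    omega
  have h2q1 : 2 ∣ q - 1 := by omega
  have h2q2 : 2 ∣ q + 1 := by omega
  have h3qpm : 3 ∣ q - 1 ∨ 3 ∣ q + 1 := by omega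
  have h3not : ¬ (3 ∣ q - 1 ∧ 3 ∣ q + 1) := by omega
  have hfac : q ^ 2 - 1 = (q - 1) * (q + 1) := sq_sub_one_fac q (by omega)
  have h3qq : 3 ∣ q ^ 2 - 1 := by
    rw [hfac]
    rcases h3qpm with h | h
    · exact Dvd.dvd.mul_right h _
    · exact Dvd.dvd.mul_left h _
  have h3d : 3 ∣ Nat.gcd n (q ^ 2 - 1) := Nat.dvd_gcd hn3 h3qq
  by_contra hd
  -- obtain m ≥ 4 with m ∣ n and m ∣ q-1 or m ∣ q+1
  obtain ⟨m, hm4, hmn, hmq⟩ : ∃ m, 4 ≤ m ∧ m ∣ n ∧ (m ∣ q - 1 ∨ m ∣ q + 1) := by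
    set a := Nat.gcd n (q - 1) with ha
    set b := Nat.gcd n (q + 1) with hb
    by_cases haa : 4 ≤ a
    · exact ⟨a, haa, Nat.gcd_dvd_left _ _, Or.inl (Nat.gcd_dvd_right _ _)⟩
    by_cases hbb : 4 ≤ b
    · exact ⟨b, hbb, Nat.gcd_dvd_left _ _, Or.inr (Nat.gcd_dvd_right _ _)⟩
    exfalso
    have hdab : Nat.gcd n (q ^ 2 - 1) ∣ a * b := by
      rw [hfac]
      exact gcd_mul_dvd_mul_gcd n (q - 1) (q + 1)
    have h3ab : 3 ∣ a * b := h3d.trans hdab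
    have h3ab' : 3 ∣ a ∨ 3 ∣ b := (Nat.Prime.dvd_mul Nat.prime_three).mp h3ab
    have ha1 : 1 ≤ a := Nat.gcd_pos_of_pos_right _ (by omega)
    have hb1 : 1 ≤ b := Nat.gcd_pos_of_pos_right _ (by omega)
    have hnodd : ¬ 2 ∣ n := by
      intro h2n
      have h2a : 2 ∣ a := Nat.dvd_gcd h2n h2q1
      have h2b : 2 ∣ b := Nat.dvd_gcd h2n h2q2
      rcases h3ab' with h | h <;> · clear * - h h2a h2b haa hbb ha1 hb1; omega
    have h2a : ¬ 2 ∣ a := fun h => hnodd (h.trans (Nat.gcd_dvd_left _ _))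
    have h2b : ¬ 2 ∣ b := fun h => hnodd (h.trans (Nat.gcd_dvd_left _ _))
    have hnot33 : ¬ (3 ∣ a ∧ 3 ∣ b) := by
      rintro ⟨h1, h2⟩
      exact h3not ⟨h1.trans (Nat.gcd_dvd_right _ _), h2.trans (Nat.gcd_dvd_right _ _)⟩
    have hab3 : a * b = 3 := by
      rcases h3ab' with h | h
      · have ha3 : a = 3 := by clear * - h h2a haa ha1; omega
        have hb3 : b = 1 := by
          have h3b : ¬ 3 ∣ b := fun hh => hnot33 ⟨h, hh⟩
          clear * - h3b h2b hbb hb1; omega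
        rw [ha3, hb3]
      · have hb3 : b = 3 := by clear * - h h2b hbb hb1; omega
        have ha3 : a = 1 := by
          have h3a : ¬ 3 ∣ a := fun hh => hnot33 ⟨hh, h⟩
          clear * - h3a h2a haa ha1; omega
        rw [ha3, hb3]
    rw [hab3] at hdab
    have hle := Nat.le_of_dvd (by norm_num) hdab
    have hpos : 0 < q ^ 2 - 1 := by
      rw [hfac]
      exact Nat.mul_pos (by omega) (by omega)
    have hge := Nat.le_of_dvd (Nat.gcd_pos_of_pos_right n hpos) h3d
    clear * - hle hge hd
    omega
  -- field-theoretic setup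
  have hmq2 : m ∣ q ^ 2 - 1 := by
    rw [hfac]
    rcases hmq with h | h
    · exact Dvd.dvd.mul_right h _
    · exact Dvd.dvd.mul_left h _
  have hpm : ¬ p ∣ m := by
    intro hpmm
    have h1 : p ∣ q ^ 2 - 1 := hpmm.trans hmq2
    have h2 : p ∣ q ^ 2 := by rw [pow_two]; exact hpq.mul_left q
    have h3 : p ∣ q ^ 2 - (q ^ 2 - 1) := Nat.dvd_sub h2 h1
    have hq21 : 1 ≤ q ^ 2 := Nat.one_le_pow _ _ (by omega)
    rw [show q ^ 2 - (q ^ 2 - 1) = 1 from by omega] at h3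
    have := Nat.le_of_dvd one_pos h3
    omega
  set L := AlgebraicClosure K with hL
  haveI hcharL : CharP L p := charP_of_injective_algebraMap (algebraMap K L).injective p
  haveI : NeZero (m : L) := ⟨by
    rw [Ne, CharP.cast_eq_zero_iff L p m]
    exact hpm⟩
  obtain ⟨u, hu⟩ := HasEnoughRootsOfUnity.exists_primitiveRoot L m
  have hu1 : u ≠ 1 := by
    intro h
    have h' := (hu.pow_eq_one_iff_dvd 1).mp (by rw [h, one_pow])
    have := Nat.le_of_dvd one_pos h'
    omega
  have hu2 : u ^ 2 ≠ 1 := by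
    intro h
    have h' := (hu.pow_eq_one_iff_dvd 2).mp h
    have := Nat.le_of_dvd (by norm_num) h'
    omega
  have hu3 : u ^ 3 ≠ 1 := by
    intro h
    have h' := (hu.pow_eq_one_iff_dvd 3).mp h
    have := Nat.le_of_dvd (by norm_num) h'
    omega
  have hun : u ^ n = 1 := (hu.pow_eq_one_iff_dvd n).mpr hmn
  have hu0 : u ≠ 0 := hu.ne_zero (by omega)
  have hu1' : (1 : L) + u ≠ 0 := by
    intro h
    have hneg : u = -1 := by
      have := eq_neg_of_add_eq_zero_right h
      simpa using this
    rw [hneg] at hu2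
    norm_num at hu2
  -- Frobenius is additive
  have hfrob : ∀ a b : L, (a + b) ^ q = a ^ q + b ^ q := by
    intro a b
    rw [hcard]
    exact add_pow_char_pow a b p e
  -- the element x'
  set x' : L := u / (1 + u) ^ 2 with hx'
  have hx'q : x' ^ q = x' := by
    have hden : ((1 + u) ^ 2) ^ q = (1 + u ^ q) ^ 2 := by
      rw [← pow_mul, mul_comm 2 q, pow_mul, hfrob 1 u, one_pow]
    rcases hmq with h | h
    · have huq : u ^ q = u := by
        have h1 : u ^ (q - 1) = 1 := (hu.pow_eq_one_iff_dvd _).mpr h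
        calc u ^ q = u ^ (q - 1 + 1) := by rw [Nat.sub_add_cancel (by omega)]
        _ = u ^ (q - 1) * u := by rw [pow_succ]
        _ = u := by rw [h1, one_mul]
      rw [hx', div_pow, hden, huq]
    · have h1 : u ^ (q + 1) = 1 := (hu.pow_eq_one_iff_dvd _).mpr h
      have huq : u ^ q * u = 1 := by rw [← pow_succ]; exact h1
      set v := u ^ q with hv
      have hv1 : (1 : L) + v ≠ 0 := by
        intro hh
        have hneg : v = -1 := by
          have := eq_neg_of_add_eq_zero_right hh
          simpa using this
        rw [hneg] at huq
        have hu' : u = -1 := by linear_combination -huq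
        rw [hu'] at hu2
        norm_num at hu2
      rw [hx', div_pow, hden]
      rw [div_eq_div_iff (pow_ne_zero 2 hv1) (pow_ne_zero 2 hu1')]
      linear_combination (u - v) * huq
  -- x' comes from K
  obtain ⟨x₀, hx₀⟩ : ∃ t : K, algebraMap K L t = x' := by
    set P : Polynomial L := Polynomial.X ^ q - Polynomial.X with hP
    have hPne : P ≠ 0 := FiniteField.X_pow_card_sub_X_ne_zero L hq2
    set T : Finset L := Finset.univ.image (algebraMap K L) with hT
    have hTcard : T.card = q := by
      rw [hT, Finset.card_image_of_injective _ (algebraMap K L).injective, Finset.card_univ]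
      exact hq
    have hTsub : T ⊆ P.roots.toFinset := by
      intro z hz
      rw [hT, Finset.mem_image] at hz
      obtain ⟨t, _, rfl⟩ := hz
      rw [Multiset.mem_toFinset, Polynomial.mem_roots']
      refine ⟨hPne, ?_⟩
      rw [hP]
      simp only [Polynomial.IsRoot, Polynomial.eval_sub, Polynomial.eval_pow, Polynomial.eval_X]
      rw [← map_pow, ← hq, FiniteField.pow_card, sub_self]
    have hcard' : P.roots.toFinset.card ≤ q := by
      calc P.roots.toFinset.card ≤ Multiset.card P.roots := Multiset.toFinset_card_le _
      _ ≤ P.natDegree := Polynomial.card_roots' P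
      _ = q := FiniteField.X_pow_card_sub_X_natDegree_eq L hq2
    have hEq : T = P.roots.toFinset := Finset.eq_of_subset_of_card_le hTsub (by omega)
    have hzmem : x' ∈ P.roots.toFinset := by
      rw [Multiset.mem_toFinset, Polynomial.mem_roots']
      refine ⟨hPne, ?_⟩
      rw [hP]
      simp only [Polynomial.IsRoot, Polynomial.eval_sub, Polynomial.eval_pow, Polynomial.eval_X]
      rw [hx'q, sub_self]
    rw [← hEq, hT, Finset.mem_image] at hzmem
    obtain ⟨t, _, ht⟩ := hzmem
    exact ⟨t, ht⟩
  -- F3 x' n = 0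
  have hFx' : F3 x' n = 0 := by
    set y : L := u / (1 + u) with hy
    have h1y : (1 : L) - y = 1 / (1 + u) := by
      rw [hy, eq_div_iff hu1', sub_mul, div_mul_cancel₀ _ hu1', one_mul]
      ring
    have hyx : y * (1 - y) = x' := by
      rw [h1y, hy, hx', div_mul_div_comm, mul_one, ← sq]
    have hkey := F3_key y n
    rw [hyx] at hkey
    have hyn : y ^ n - (1 - y) ^ n = 0 := by
      rw [h1y, hy, div_pow, div_pow, hun]
      simp
    rw [hyn] at hkey
    have h2y' : 2 * y - 1 = (u - 1) / (1 + u) := by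
      rw [hy]
      rw [eq_div_iff hu1', sub_mul, mul_assoc, div_mul_cancel₀ _ hu1']
      ring
    have h2y : 2 * y - 1 ≠ 0 := by
      rw [h2y']
      exact div_ne_zero (sub_ne_zero.mpr hu1) hu1'
    exact (mul_eq_zero.mp hkey).resolve_left h2y
  -- transfer to K
  have hFx₀ : F3 x₀ n = 0 := by
    apply (algebraMap K L).injective
    rw [F3_map (algebraMap K L) x₀ n, hx₀, hFx', map_zero]
  have hF1 : F3 (1 : K) n = 0 := by
    obtain ⟨c, rfl⟩ := hn3
    exact F3_one c
  have hx₀1 : x₀ ≠ 1 := by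
    intro h
    rw [h, map_one] at hx₀
    have hu' : u = (1 + u) ^ 2 := by
      rw [hx', eq_comm, div_eq_one_iff_eq (pow_ne_zero 2 hu1')] at hx₀
      exact hx₀
    apply hu3
    linear_combination (1 - u) * hu'
  exact hx₀1 (hbij.injective (show F3 x₀ n = F3 1 n from hFx₀.trans hF1.symm))
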